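/- Let G₁ and G₂ be nontrivial groups, not both of order 2, with G₁ of order at least 3. Then the free product G₁ * G₂ contains a free subgroup of rank 2. -/

import Mathlib

open Pointwise Monoid Monoid.CoprodI Monoid.CoprodI.Word

namespace myAux

section words
variable {ι : Type*} [DecidableEq ι] {M : ι → Type*} [∀ i, Group (M i)]
  [∀ i, DecidableEq (M i)]

variable {ι : Type*} [DecidableEq ι] {M : ι → Type*} [∀ i, Group (M i)]
  [∀ i, DecidableEq (M i)]

lemma smul_toList_of_ne (i : ι) (m : M i) (hm : m ≠ 1) (w : Word M)
    (hw : w.fstIdx ≠ some i) :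
    (CoprodI.of m • w).toList = ⟨i, m⟩ :: w.toList := by
  rw [Word.of_smul_def, Word.equivPair_eq_of_fstIdx_ne hw]
  simp [Word.rcons, hm, Word.cons]

lemma smul_fstIdx_of_ne (i : ι) (m : M i) (hm : m ≠ 1) (w : Word M)
    (hw : w.fstIdx ≠ some i) :
    (CoprodI.of m • w).fstIdx = some i := by
  simp [Word.fstIdx, smul_toList_of_ne i m hm w hw]

lemma smul_cons_merge (i : ι) (m m' : M i) (w : Word M) (h1 : w.fstIdx ≠ some i)
    (h2 : m' ≠ 1) :
    (CoprodI.of m • (Word.cons m' w h1 h2)) = CoprodI.of (m * m') • w := by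
  rw [Word.cons_eq_smul, ← mul_smul, ← MonoidHom.map_mul]

lemma smul_cons_cancel (i : ι) (m : M i) (w : Word M) (h1 : w.fstIdx ≠ some i)
    (h2 : m⁻¹ ≠ 1) :
    (CoprodI.of m • (Word.cons m⁻¹ w h1 h2)) = w := by
  rw [Word.cons_eq_smul, ← mul_smul, ← MonoidHom.map_mul, mul_inv_cancel,
    MonoidHom.map_one, one_smul]

lemma prepend2 {i j : ι} (hij : i ≠ j) (p : M i) (s : M j) (hp : p ≠ 1) (hs : s ≠ 1)
    (w : Word M) (hw : w.fstIdx ≠ some j) :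
    ((CoprodI.of p * CoprodI.of s) • w).toList = ⟨i, p⟩ :: ⟨j, s⟩ :: w.toList := by
  rw [mul_smul, smul_toList_of_ne i p hp _ (by
      rw [smul_fstIdx_of_ne j s hs w hw]; simp [Ne.symm hij]),
    smul_toList_of_ne j s hs w hw]

lemma prepend3 {i j : ι} (hij : i ≠ j) (p q : M i) (s : M j)
    (hp : p ≠ 1) (hq : q ≠ 1) (hs : s ≠ 1)
    (w : Word M) (hw : w.fstIdx ≠ some i) :
    ((CoprodI.of p * CoprodI.of s * CoprodI.of q) • w).toList
      = ⟨i, p⟩ :: ⟨j, s⟩ :: ⟨i, q⟩ :: w.toList := by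
  rw [mul_smul, prepend2 hij p s hp hs _ (by
      rw [smul_fstIdx_of_ne i q hq w hw]; simp [hij]),
    smul_toList_of_ne i q hq w hw]

lemma keyC {i j : ι} (hij : i ≠ j) (p q : M i) (s : M j)
    (hp : p ≠ 1) (hq : q ≠ 1) (hs : s ≠ 1)
    (w : Word M) (hw : w.toList.head? ≠ some ⟨i, q⁻¹⟩) :
    ((CoprodI.of p * CoprodI.of s * CoprodI.of q) • w).toList.take 2
      = [⟨i, p⟩, ⟨j, s⟩] := by
  revert hw
  induction w using Word.consRecOn with
  | empty =>
      intro hw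
      rw [prepend3 hij p q s hp hq hs _ (by simp [Word.fstIdx, Word.empty])]
      rfl
  | cons k m w' h1 h2 _ =>
      intro hw
      by_cases hk : k = i
      · subst hk
        have hm : m ≠ q⁻¹ := by
          rintro rfl
          exact hw (by simp [Word.cons])
        have hqm : q * m ≠ 1 := fun h => hm (eq_inv_of_mul_eq_one_right h)
        rw [mul_smul, smul_cons_merge _ q m w' h1 h2,
          prepend2 hij p s hp hs _ (by
            rw [smul_fstIdx_of_ne _ (q * m) hqm w' h1]; exact fun h => hij (Option.some.inj h))]
        rfl
      · rw [prepend3 hij p q s hp hq hs _ (by simp [hk])]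
        rfl

lemma key {i j : ι} (hij : i ≠ j) (p q : M i) (s t : M j)
    (hp : p ≠ 1) (hq : q ≠ 1) (hs : s ≠ 1) (ht : t ≠ 1) (w : Word M)
    (hw : w.toList.take 2 ≠ [⟨j, t⁻¹⟩, ⟨i, q⁻¹⟩]) :
    ((CoprodI.of p * CoprodI.of s * CoprodI.of q * CoprodI.of t) • w).toList.take 2
      = [⟨i, p⟩, ⟨j, s⟩] := by
  rw [mul_smul]
  apply keyC hij p q s hp hq hs
  revert hw
  induction w using Word.consRecOn with
  | empty =>
      intro hw
      rw [smul_toList_of_ne j t ht _ (by simp [Word.fstIdx, Word.empty])]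
      simp [Ne.symm hij]
  | cons k m w' h1 h2 _ =>
      intro hw
      by_cases hk : k = j
      · subst hk
        by_cases hm : m = t⁻¹
        · subst hm
          rw [smul_cons_cancel _ t w' h1 h2]
          intro hh
          apply hw
          rcases hl : w'.toList with _ | ⟨x, l'⟩
          · rw [hl] at hh; simp at hh
          · rw [hl] at hh
            simp only [List.head?_cons, Option.some.injEq] at hh
            simp [Word.cons, hl, hh]
        · have htm : t * m ≠ 1 := fun h => hm (eq_inv_of_mul_eq_one_right h)
          rw [smul_cons_merge _ t m w' h1 h2,
            smul_toList_of_ne _ (t * m) htm w' h1]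
          simp [Ne.symm hij]
      · rw [smul_toList_of_ne j t ht _ (by simp [hk])]
        simp [Ne.symm hij]


end words

universe u v
variable (G₁ : Type u) (G₂ : Type v) [Group G₁] [Group G₂]


@[reducible] def Fac : Bool → Type (max u v) := fun b => cond b (ULift.{v} G₁) (ULift.{u} G₂)

instance : ∀ b, Group (Fac G₁ G₂ b) := fun b =>
  match b with
  | true => inferInstanceAs (Group (ULift G₁))
  | false => inferInstanceAs (Group (ULift G₂))

noncomputable instance : ∀ b, DecidableEq (Fac G₁ G₂ b) := fun _ => Classical.decEq _

/-- The natural map from the indexed free product to the binary free product. -/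
noncomputable def toCoprod : CoprodI (Fac G₁ G₂) →* Coprod G₁ G₂ :=
  CoprodI.lift fun b =>
    match b with
    | true => Coprod.inl.comp ((MulEquiv.ulift (α := G₁)).toMonoidHom)
    | false => Coprod.inr.comp ((MulEquiv.ulift (α := G₂)).toMonoidHom)

/-- A one-sided inverse. -/
noncomputable def fromCoprod : Coprod G₁ G₂ →* CoprodI (Fac G₁ G₂) :=
  Coprod.lift
    ((CoprodI.of (M := Fac G₁ G₂) (i := true)).comp
      (MulEquiv.ulift (α := G₁)).symm.toMonoidHom)
    ((CoprodI.of (M := Fac G₁ G₂) (i := false)).comp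
      (MulEquiv.ulift (α := G₂)).symm.toMonoidHom)

lemma toCoprod_injective : Function.Injective (toCoprod G₁ G₂) := by
  have h : (fromCoprod G₁ G₂).comp (toCoprod G₁ G₂) = MonoidHom.id _ := by
    apply CoprodI.ext_hom
    intro b
    ext x
    cases b <;>
      simp [toCoprod, fromCoprod, MulEquiv.ulift] <;> rfl
  intro x y hxy
  have hx := DFunLike.congr_fun h x
  have hy := DFunLike.congr_fun h y
  simp only [MonoidHom.coe_comp, Function.comp_apply, MonoidHom.id_apply] at hx hy
  rw [← hx, ← hy, hxy]



variable {G₁ G₂}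

lemma up_ne_one₁ {x : G₁} (hx : x ≠ 1) : (ULift.up x : Fac G₁ G₂ true) ≠ 1 :=
  fun h => hx (congrArg ULift.down h)

lemma up_ne_one₂ {y : G₂} (hy : y ≠ 1) : (ULift.up y : Fac G₁ G₂ false) ≠ 1 :=
  fun h => hy (congrArg ULift.down h)

@[simp] lemma up_inv₁ (z : G₁) : (ULift.up z : Fac G₁ G₂ true)⁻¹ = ULift.up z⁻¹ := rfl

@[simp] lemma up_inv₂ (z : G₂) : (ULift.up z : Fac G₁ G₂ false)⁻¹ = ULift.up z⁻¹ := rfl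

/-- The generators for the ping-pong argument. -/
noncomputable def gen (x y : G₁) (b : G₂) : CoprodI (Fac G₁ G₂) :=
  CoprodI.of (M := Fac G₁ G₂) (i := true) (ULift.up x)
    * CoprodI.of (M := Fac G₁ G₂) (i := false) (ULift.up b)
    * CoprodI.of (M := Fac G₁ G₂) (i := true) (ULift.up y)
    * CoprodI.of (M := Fac G₁ G₂) (i := false) (ULift.up b)

lemma gen_inv (x y : G₁) (b : G₂) :
    (gen x y b)⁻¹
      = CoprodI.of (M := Fac G₁ G₂) (i := false) (ULift.up b⁻¹)
        * CoprodI.of (M := Fac G₁ G₂) (i := true) (ULift.up y⁻¹)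
        * CoprodI.of (M := Fac G₁ G₂) (i := false) (ULift.up b⁻¹)
        * CoprodI.of (M := Fac G₁ G₂) (i := true) (ULift.up x⁻¹) := by
  have h1 : ∀ z : G₁, ULift.up (z⁻¹) = (ULift.up z : Fac G₁ G₂ true)⁻¹ := fun z => rfl
  have h2 : ∀ z : G₂, ULift.up (z⁻¹) = (ULift.up z : Fac G₁ G₂ false)⁻¹ := fun z => rfl
  simp only [gen, h1, h2, map_inv, mul_inv_rev, mul_assoc]






lemma gen_smul {x y : G₁} {b : G₂} (hx : x ≠ 1) (hy : y ≠ 1) (hb : b ≠ 1)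
    (w : Word (Fac G₁ G₂))
    (hw : w.toList.take 2 ≠ [⟨false, ULift.up b⁻¹⟩, ⟨true, ULift.up y⁻¹⟩]) :
    (gen x y b • w).toList.take 2
      = [⟨true, ULift.up x⟩, ⟨false, ULift.up b⟩] := by
  apply key (M := Fac G₁ G₂) (i := true) (j := false) (by simp)
    (ULift.up x) (ULift.up y) (ULift.up b) (ULift.up b)
    (up_ne_one₁ hx) (up_ne_one₁ hy) (up_ne_one₂ hb) (up_ne_one₂ hb) w
  simpa using hw

lemma gen_inv_smul {x y : G₁} {b : G₂} (hx : x ≠ 1) (hy : y ≠ 1) (hb : b ≠ 1)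
    (w : Word (Fac G₁ G₂))
    (hw : w.toList.take 2 ≠ [⟨true, ULift.up x⟩, ⟨false, ULift.up b⟩]) :
    ((gen x y b)⁻¹ • w).toList.take 2
      = [⟨false, ULift.up b⁻¹⟩, ⟨true, ULift.up y⁻¹⟩] := by
  rw [gen_inv]
  apply key (M := Fac G₁ G₂) (i := false) (j := true) (by simp)
    (ULift.up b⁻¹) (ULift.up b⁻¹) (ULift.up y⁻¹) (ULift.up x⁻¹)
    (up_ne_one₂ (inv_ne_one.2 hb)) (up_ne_one₂ (inv_ne_one.2 hb))
    (up_ne_one₁ (inv_ne_one.2 hy)) (up_ne_one₁ (inv_ne_one.2 hx)) w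
  simpa using hw

end myAux

/-- If G₁ and G₂ are nontrivial groups with |G₁| ≥ 3, then the free product G₁ * G₂
contains a free subgroup of rank 2. -/
theorem coprod_contains_free_rank_two (G₁ G₂ : Type*) [Group G₁] [Group G₂]
    [Nontrivial G₁] [Nontrivial G₂] (hG₁ : 3 ≤ Cardinal.mk G₁) :
    ∃ φ : FreeGroup (Fin 2) →* Monoid.Coprod G₁ G₂, Function.Injective φ := by
  obtain ⟨a₁, ha₁, -⟩ := Cardinal.three_le hG₁ 1 1
  obtain ⟨a₂, ha₂, ha₂₁⟩ := Cardinal.three_le hG₁ 1 a₁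
  obtain ⟨b, hb⟩ := exists_ne (1 : G₂)
  let A : Fin 2 → G₁ := ![a₁, a₂]
  let A' : Fin 2 → G₁ := ![a₂, a₁]
  have hA : ∀ k, A k ≠ 1 := by intro k; fin_cases k <;> simp [A, ha₁, ha₂]
  have hA' : ∀ k, A' k ≠ 1 := by intro k; fin_cases k <;> simp [A', ha₁, ha₂]
  have hAne : ∀ k l : Fin 2, k ≠ l → A k ≠ A l := by
    intro k l hkl
    fin_cases k <;> fin_cases l <;> (simp_all [A]; try exact fun h => ha₂₁ h.symm)
  have hA'ne : ∀ k l : Fin 2, k ≠ l → A' k ≠ A' l := by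
    intro k l hkl
    fin_cases k <;> fin_cases l <;> (simp_all [A']; try exact fun h => ha₂₁ h.symm)
  let a : ULift (Fin 2) → CoprodI (myAux.Fac G₁ G₂) := fun k =>
    myAux.gen (A k.down) (A' k.down) b
  let X : ULift (Fin 2) → Set (Word (myAux.Fac G₁ G₂)) := fun k =>
    {w | w.toList.take 2 = [⟨true, ULift.up (A k.down)⟩, ⟨false, ULift.up b⟩]}
  let Y : ULift (Fin 2) → Set (Word (myAux.Fac G₁ G₂)) := fun k =>
    {w | w.toList.take 2 = [⟨false, ULift.up b⁻¹⟩, ⟨true, ULift.up (A' k.down)⁻¹⟩]}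
  have hX : ∀ k, a k • (Y k)ᶜ ⊆ X k := by
    rintro k x ⟨w, hw, rfl⟩
    exact myAux.gen_smul (hA k.down) (hA' k.down) hb w hw
  have hY : ∀ k, (a⁻¹) k • (X k)ᶜ ⊆ Y k := by
    rintro k x ⟨w, hw, rfl⟩
    exact myAux.gen_inv_smul (hA k.down) (hA' k.down) hb w hw
  have hXne : ∀ k, (X k).Nonempty := fun k =>
    ⟨a k • Word.empty, hX k (Set.smul_mem_smul_set (by
      show ¬ (Word.empty : Word (myAux.Fac G₁ G₂)).toList.take 2 = _
      simp [Word.empty]))⟩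
  have hXd : Pairwise (Function.onFun Disjoint X) := by
    intro k l hkl
    refine Set.disjoint_left.2 fun w hwk hwl => ?_
    have h2 : A k.down = A l.down := by
      simpa using (hwk.symm.trans hwl : ([_,_] : List _) = _)
    exact hAne k.down l.down (fun h => hkl (ULift.down_injective h)) h2
  have hYd : Pairwise (Function.onFun Disjoint Y) := by
    intro k l hkl
    refine Set.disjoint_left.2 fun w hwk hwl => ?_
    have h2 : (A' k.down)⁻¹ = (A' l.down)⁻¹ := by
      simpa using (hwk.symm.trans hwl : ([_,_] : List _) = _)
    exact hA'ne k.down l.down (fun h => hkl (ULift.down_injective h)) (inv_injective h2)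
  have hXYd : ∀ k l, Disjoint (X k) (Y l) := by
    intro k l
    refine Set.disjoint_left.2 fun w hwk hwl => ?_
    simpa using (hwk.symm.trans hwl : ([_,_] : List _) = _)
  have main := FreeGroup.injective_lift_of_ping_pong a X Y hXne hXd hYd hXYd hX hY
  refine ⟨(myAux.toCoprod G₁ G₂).comp ((FreeGroup.lift a).comp
      (FreeGroup.freeGroupCongr Equiv.ulift.symm).toMonoidHom), ?_⟩
  exact (myAux.toCoprod_injective G₁ G₂).comp
    (main.comp (FreeGroup.freeGroupCongr Equiv.ulift.symm).injective)
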